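/- Let S = (S_t)_{t∈[0,1]} be a càdlàg bounded adapted good integrator. Then for every ε > 0 there exist a constant C > 0 and a sequence (ρ_n)_{n≥1} of [0,1]∪{∞}-valued stopping times such that P(ρ_n = ∞) ≥ 1 − ε and Var(S^{ρ_n}, D_n) ≤ C for every n, where S^{ρ_n} denotes S stopped at ρ_n. -/

import Mathlib

open MeasureTheory Set Filter Topology

noncomputable section

namespace BD

variable {Ω : Type*} {m0 : MeasurableSpace Ω}

/-- The filtration is right-continuous. -/
def RightContinuousFiltration (ℱ : Filtration ℝ m0) : Prop :=
  ∀ t : ℝ, ℱ t = ⨅ s ∈ Set.Ioi t, ℱ s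

/-- `ℱ 0` contains all `P`-null sets. -/
def CompleteFiltration (ℱ : Filtration ℝ m0) (P : Measure Ω) : Prop :=
  ∀ s : Set Ω, P s = 0 → MeasurableSet[ℱ 0] s

/-- The usual conditions: right continuity and completeness. -/
def UsualConditions (ℱ : Filtration ℝ m0) (P : Measure Ω) : Prop :=
  RightContinuousFiltration ℱ ∧ CompleteFiltration ℱ P

/-- A real function is càdlàg on the time interval `[0,1]`: it is right-continuous on `[0,1)`
and has left limits on `(0,1]`. -/
def IsCadlagFun (f : ℝ → ℝ) : Prop :=
  (∀ t ∈ Set.Ico (0:ℝ) 1, ContinuousWithinAt f (Set.Ici t) t) ∧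
  (∀ t ∈ Set.Ioc (0:ℝ) 1, ∃ l : ℝ, Tendsto f (nhdsWithin t (Set.Iio t)) (nhds l))

/-- A process is càdlàg if all its paths are càdlàg on `[0,1]`. -/
def Cadlag (S : ℝ → Ω → ℝ) : Prop := ∀ ω, IsCadlagFun fun t => S t ω

/-- The process is adapted on the time interval `[0,1]`. -/
def AdaptedOn (ℱ : Filtration ℝ m0) (S : ℝ → Ω → ℝ) : Prop :=
  ∀ t ∈ Set.Icc (0:ℝ) 1, StronglyMeasurable[ℱ t] (S t)

/-- A `[0,1] ∪ {∞}`-valued random time (modelled as a `WithTop ℝ`-valued map) is a stopping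
time if `{ρ ≤ t} ∈ ℱ t` for every `t`. -/
def IsStoppingTimeTop (ℱ : Filtration ℝ m0) (ρ : Ω → WithTop ℝ) : Prop :=
  ∀ t : ℝ, MeasurableSet[ℱ t] {ω | ρ ω ≤ (t : WithTop ℝ)}

/-- The random time takes values in `[0,1] ∪ {∞}`. -/
def ValuedInUnitOrTop (ρ : Ω → WithTop ℝ) : Prop :=
  ∀ ω, ρ ω = ⊤ ∨ ∃ t ∈ Set.Icc (0:ℝ) 1, ρ ω = (t : WithTop ℝ)

/-- The process `S` stopped at the (possibly infinite) random time `ρ`. -/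
def stopped (S : ℝ → Ω → ℝ) (ρ : Ω → WithTop ℝ) : ℝ → Ω → ℝ :=
  fun t ω => S (WithTop.untopD t (min (t : WithTop ℝ) (ρ ω))) ω

/-- A simple integrand `H = ∑_{i=1}^k H^i 1_{(τ_i, τ_{i+1}]}` where the `τ_i` are `[0,1]`-valued
stopping times, increasing in `i`, and `H^i` is bounded and `ℱ_{τ_i}`-measurable. -/
structure SimpleIntegrand (ℱ : Filtration ℝ m0) where
  k : ℕ
  τ : Fin (k + 1) → Ω → ℝ
  τ_mono : ∀ ω, Monotone fun i => τ i ω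
  τ_mem : ∀ i ω, τ i ω ∈ Set.Icc (0:ℝ) 1
  τ_stopping : ∀ i, IsStoppingTime ℱ (fun ω => ((τ i ω : ℝ) : WithTop ℝ))
  H : Fin k → Ω → ℝ
  H_bdd : ∀ i, ∃ C : ℝ, ∀ ω, |H i ω| ≤ C
  H_meas : ∀ i : Fin k,
    StronglyMeasurable[(τ_stopping i.castSucc).measurableSpace] (H i)

/-- The value of a simple integrand at time `t`. -/
def SimpleIntegrand.val {ℱ : Filtration ℝ m0} (Hs : SimpleIntegrand ℱ) (t : ℝ) (ω : Ω) : ℝ :=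
  ∑ i : Fin Hs.k, if Hs.τ i.castSucc ω < t ∧ t ≤ Hs.τ i.succ ω then Hs.H i ω else 0

/-- `c` is a uniform (sup-norm) bound for the simple integrand. -/
def SimpleIntegrand.BddBy {ℱ : Filtration ℝ m0} (Hs : SimpleIntegrand ℱ) (c : ℝ) : Prop :=
  ∀ t ω, |Hs.val t ω| ≤ c

/-- The elementary stochastic integral `I_S(H) = ∑ H^i (S_{τ_{i+1}} - S_{τ_i})`. -/
def elemIntegral {ℱ : Filtration ℝ m0} (S : ℝ → Ω → ℝ) (Hs : SimpleIntegrand ℱ) (ω : Ω) : ℝ :=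
  ∑ i : Fin Hs.k, Hs.H i ω * (S (Hs.τ i.succ ω) ω - S (Hs.τ i.castSucc ω) ω)

/-- `S` is a good integrator: `I_S` is continuous from the simple integrands (with the sup norm)
to `L⁰(P)`, i.e. `‖Hⁿ‖_∞ → 0` implies `I_S(Hⁿ) → 0` in probability. -/
def GoodIntegrator (ℱ : Filtration ℝ m0) (P : Measure Ω) (S : ℝ → Ω → ℝ) : Prop :=
  ∀ (Hs : ℕ → SimpleIntegrand ℱ) (c : ℕ → ℝ),
    (∀ n, (Hs n).BddBy (c n)) → Tendsto c atTop (nhds 0) →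
    TendstoInMeasure P (fun n => elemIntegral S (Hs n)) atTop 0

/-- A submartingale on the time interval `[0,1]`. -/
def SubmartingaleOn (ℱ : Filtration ℝ m0) (P : Measure Ω) (Y : ℝ → Ω → ℝ) : Prop :=
  AdaptedOn ℱ Y ∧ (∀ t ∈ Set.Icc (0:ℝ) 1, Integrable (Y t) P) ∧
    ∀ s t : ℝ, s ∈ Set.Icc (0:ℝ) 1 → t ∈ Set.Icc (0:ℝ) 1 → s ≤ t →
      ∀ᵐ ω ∂P, Y s ω ≤ (P[Y t | ℱ s]) ω

/-- A martingale on the time interval `[0,1]`. -/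
def MartingaleOn (ℱ : Filtration ℝ m0) (P : Measure Ω) (Y : ℝ → Ω → ℝ) : Prop :=
  AdaptedOn ℱ Y ∧ (∀ t ∈ Set.Icc (0:ℝ) 1, Integrable (Y t) P) ∧
    ∀ s t : ℝ, s ∈ Set.Icc (0:ℝ) 1 → t ∈ Set.Icc (0:ℝ) 1 → s ≤ t →
      (P[Y t | ℱ s]) =ᵐ[P] Y s

/-- A local martingale on `[0,1]`: for every `ε > 0` there is a `[0,1] ∪ {∞}`-valued stopping
time `ρ` with `P(ρ = ∞) ≥ 1 - ε` such that the stopped process is a martingale. -/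
def IsLocalMartingaleOn (ℱ : Filtration ℝ m0) (P : Measure Ω) (M : ℝ → Ω → ℝ) : Prop :=
  ∀ ε : ℝ, 0 < ε → ∃ ρ : Ω → WithTop ℝ, IsStoppingTimeTop ℱ ρ ∧ ValuedInUnitOrTop ρ ∧
    1 - ENNReal.ofReal ε ≤ P {ω | ρ ω = ⊤} ∧ MartingaleOn ℱ P (stopped M ρ)

/-- All paths of the process have finite total variation on `[0,1]`. -/
def FiniteVariationPaths (A : ℝ → Ω → ℝ) : Prop :=
  ∀ ω, BoundedVariationOn (fun t => A t ω) (Set.Icc (0:ℝ) 1)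

/-- `S` is a semimartingale on `[0,1]`: it is (up to indistinguishability on `[0,1]`) the sum
of a càdlàg local martingale and a càdlàg adapted process of finite variation. -/
def IsSemimartingaleOn (ℱ : Filtration ℝ m0) (P : Measure Ω) (S : ℝ → Ω → ℝ) : Prop :=
  ∃ M A : ℝ → Ω → ℝ, Cadlag M ∧ IsLocalMartingaleOn ℱ P M ∧
    Cadlag A ∧ AdaptedOn ℱ A ∧ FiniteVariationPaths A ∧
    ∀ᵐ ω ∂P, ∀ t ∈ Set.Icc (0:ℝ) 1, S t ω = M t ω + A t ω

/-- A partition `0 = t_0 < t_1 < … < t_n = 1` of `[0,1]`. -/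
structure Partition where
  n : ℕ
  t : Fin (n + 1) → ℝ
  strictMono : StrictMono t
  first : t 0 = 0
  last : t (Fin.last n) = 1

/-- The mean variation `Var(S, π) = E ∑_i |E[S_{t_{i+1}} - S_{t_i} | ℱ_{t_i}]|` of `S`
along the partition `π`. -/
def meanVar (ℱ : Filtration ℝ m0) (P : Measure Ω) (S : ℝ → Ω → ℝ) (π : Partition) : ℝ :=
  ∑ i : Fin π.n,
    ∫ ω, |(P[fun ω => S (π.t i.succ) ω - S (π.t i.castSucc) ω | ℱ (π.t i.castSucc)]) ω| ∂P

/-- The `n`-th dyadic partition `{0, 1/2ⁿ, …, 1}` of `[0,1]`. -/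
def dyadicPartition (n : ℕ) : Partition where
  n := 2 ^ n
  t := fun i => (i.val : ℝ) / 2 ^ n
  strictMono := by
    intro i j hij
    have h2 : (0:ℝ) < 2 ^ n := by positivity
    have h : (i.val : ℝ) < (j.val : ℝ) := by exact_mod_cast hij
    exact div_lt_div_of_pos_right h h2
  first := by simp
  last := by
    have h2 : (2:ℝ) ^ n ≠ 0 := by positivity
    simp [Fin.last, h2]

/-- The Riemann sum `∑_{i=0}^{2ⁿ-1} H_{i/2ⁿ} (S_{(i+1)/2ⁿ} - S_{i/2ⁿ})`. -/
def riemannSum (S H : ℝ → Ω → ℝ) (n : ℕ) (ω : Ω) : ℝ :=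
  ∑ i ∈ Finset.range (2 ^ n),
    H ((i : ℝ) / 2 ^ n) ω * (S (((i : ℝ) + 1) / 2 ^ n) ω - S ((i : ℝ) / 2 ^ n) ω)

/-- A bounded adapted process with continuous paths on `[0,1]`. -/
def BddContAdapted (ℱ : Filtration ℝ m0) (H : ℝ → Ω → ℝ) : Prop :=
  (∃ C : ℝ, ∀ t ∈ Set.Icc (0:ℝ) 1, ∀ ω, |H t ω| ≤ C) ∧ AdaptedOn ℱ H ∧
    ∀ ω, ContinuousOn (fun t => H t ω) (Set.Icc (0:ℝ) 1)

/-- `S` is a Riemann integrator: for every bounded adapted continuous process `H`, the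
Riemann sums along the dyadic partitions converge in probability. -/
def RiemannIntegrator (ℱ : Filtration ℝ m0) (P : Measure Ω) (S : ℝ → Ω → ℝ) : Prop :=
  ∀ H : ℝ → Ω → ℝ, BddContAdapted ℱ H →
    ∃ L : Ω → ℝ, TendstoInMeasure P (fun n => riemannSum S H n) atTop L

/-- An element of `ℰ_{D_n}`: a process `∑_{i=0}^{2ⁿ-1} H^i 1_{(i/2ⁿ, (i+1)/2ⁿ]}` with `H⁰ = 0`
and `H^i` bounded and `ℱ_{(i-1)/2ⁿ}`-measurable for `1 ≤ i ≤ 2ⁿ - 1`. -/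
structure DyadicIntegrand (ℱ : Filtration ℝ m0) where
  n : ℕ
  H : ℕ → Ω → ℝ
  H_zero : H 0 = fun _ => 0
  H_bdd : ∀ i, ∃ C : ℝ, ∀ ω, |H i ω| ≤ C
  H_meas : ∀ i : ℕ, 1 ≤ i → i < 2 ^ n →
    StronglyMeasurable[ℱ (((i : ℝ) - 1) / 2 ^ n)] (H i)

/-- The elementary integral of an element of `ℰ_{D_n}` against `S`. -/
def dyadicIntegral {ℱ : Filtration ℝ m0} (S : ℝ → Ω → ℝ) (D : DyadicIntegrand ℱ) (ω : Ω) : ℝ :=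
  ∑ i ∈ Finset.range (2 ^ D.n),
    D.H i ω * (S (((i : ℝ) + 1) / 2 ^ D.n) ω - S ((i : ℝ) / 2 ^ D.n) ω)

/-- `c` is a uniform bound for an element of `ℰ_{D_n}` (hence for its sup norm). -/
def DyadicIntegrand.BddBy {ℱ : Filtration ℝ m0} (D : DyadicIntegrand ℱ) (c : ℝ) : Prop :=
  ∀ i < 2 ^ D.n, ∀ ω, |D.H i ω| ≤ c

/-- The jump `ΔS_t = S_t - S_{t-}` of the process `S` at time `t`. -/
def jump (S : ℝ → Ω → ℝ) (t : ℝ) (ω : Ω) : ℝ :=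
  S t ω - Function.leftLim (fun s => S s ω) t

/-- The times `s ∈ (0, t]` at which `S` has a jump of size at least `1`. -/
def bigJumpTimes (S : ℝ → Ω → ℝ) (t : ℝ) (ω : Ω) : Set ℝ :=
  {s : ℝ | s ∈ Set.Ioc (0:ℝ) t ∧ 1 ≤ |jump S s ω|}

/-- The sum of the big jumps: `J_t = ∑_{0 < s ≤ t} ΔS_s 1_{|ΔS_s| ≥ 1}`. -/
def bigJumpPart (S : ℝ → Ω → ℝ) (t : ℝ) (ω : Ω) : ℝ :=
  ∑ᶠ s ∈ bigJumpTimes S t ω, jump S s ω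


open scoped Classical

section Aux

variable {ℱ : Filtration ℝ m0} {P : Measure Ω} {S : ℝ → Ω → ℝ}

lemma SimpleIntegrand.bddBy_of_forall (Hs : SimpleIntegrand ℱ)
    {c : ℝ} (hc : 0 ≤ c) (h : ∀ i ω, |Hs.H i ω| ≤ c) : Hs.BddBy c := by
  intro t ω
  have hsub : ∀ i j : Fin Hs.k, (Hs.τ i.castSucc ω < t ∧ t ≤ Hs.τ i.succ ω) →
      (Hs.τ j.castSucc ω < t ∧ t ≤ Hs.τ j.succ ω) → i = j := by
    intro i j hi hj
    by_contra hne
    rcases lt_or_gt_of_ne hne with h' | h'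
    · have hv : (i : ℕ) < (j : ℕ) := h'
      have hle : Hs.τ i.succ ω ≤ Hs.τ j.castSucc ω :=
        Hs.τ_mono ω (by rw [Fin.le_def, Fin.val_succ, Fin.coe_castSucc]; omega)
      linarith [hi.2, hj.1]
    · have hv : (j : ℕ) < (i : ℕ) := h'
      have hle : Hs.τ j.succ ω ≤ Hs.τ i.castSucc ω :=
        Hs.τ_mono ω (by rw [Fin.le_def, Fin.val_succ, Fin.coe_castSucc]; omega)
      linarith [hj.2, hi.1]
  rw [SimpleIntegrand.val]
  by_cases hex : ∃ i : Fin Hs.k, Hs.τ i.castSucc ω < t ∧ t ≤ Hs.τ i.succ ω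
  · obtain ⟨i0, hi0⟩ := hex
    rw [Finset.sum_eq_single i0]
    · simp only [hi0, if_true]; exact h i0 ω
    · intro j _ hj
      by_cases hjc : Hs.τ j.castSucc ω < t ∧ t ≤ Hs.τ j.succ ω
      · exact absurd (hsub j i0 hjc hi0) hj
      · simp [hjc]
    · intro hmem; exact absurd (Finset.mem_univ i0) hmem
  · push_neg at hex
    have : ∀ i : Fin Hs.k,
        (if Hs.τ i.castSucc ω < t ∧ t ≤ Hs.τ i.succ ω then Hs.H i ω else 0) = 0 := by
      intro i
      rw [if_neg]
      intro hcon
      exact absurd hcon.2 (not_le.mpr (hex i hcon.1))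
    rw [Finset.sum_congr rfl fun i _ => this i, Finset.sum_const_zero]
    simpa using hc

/-- Scaling a simple integrand by a constant. -/
def SimpleIntegrand.smul (r : ℝ) (Hs : SimpleIntegrand ℱ) : SimpleIntegrand ℱ where
  k := Hs.k
  τ := Hs.τ
  τ_mono := Hs.τ_mono
  τ_mem := Hs.τ_mem
  τ_stopping := Hs.τ_stopping
  H := fun i ω => r * Hs.H i ω
  H_bdd := fun i => by
    obtain ⟨C, hC⟩ := Hs.H_bdd i
    exact ⟨|r| * C, fun ω => by
      rw [abs_mul]
      exact mul_le_mul_of_nonneg_left (hC ω) (abs_nonneg r)⟩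
  H_meas := fun i => stronglyMeasurable_const.mul (Hs.H_meas i)

lemma SimpleIntegrand.smul_bddBy (r : ℝ) (Hs : SimpleIntegrand ℱ) {c : ℝ}
    (h : Hs.BddBy c) : (Hs.smul r).BddBy (|r| * c) := by
  intro t ω
  have : (Hs.smul r).val t ω = r * Hs.val t ω := by
    simp only [SimpleIntegrand.val, SimpleIntegrand.smul, Finset.mul_sum, mul_ite, mul_zero]
    rfl
  rw [this, abs_mul]
  exact mul_le_mul_of_nonneg_left (h t ω) (abs_nonneg r)

lemma elemIntegral_smul (r : ℝ) (Hs : SimpleIntegrand ℱ) (ω : Ω) :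
    elemIntegral S (Hs.smul r) ω = r * elemIntegral S Hs ω := by
  simp only [elemIntegral, SimpleIntegrand.smul, Finset.mul_sum, mul_assoc]
  rfl

/-- Boundedness in probability of the image of the unit ball under `I_S`. -/
lemma goodIntegrator_bddInProb [IsProbabilityMeasure P]
    (hS_good : GoodIntegrator ℱ P S) {ε : ℝ} (hε : 0 < ε) :
    ∃ C : ℝ, 0 < C ∧ ∀ Hs : SimpleIntegrand ℱ, Hs.BddBy 1 →
      P {ω | C ≤ |elemIntegral S Hs ω|} ≤ ENNReal.ofReal ε := by
  by_contra hcon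
  push_neg at hcon
  choose Hs hHs1 hHs2 using fun n : ℕ => hcon ((n : ℝ) + 1) (by positivity)
  set Hs' : ℕ → SimpleIntegrand ℱ := fun n => (Hs n).smul (1 / ((n : ℝ) + 1)) with hHs'
  have hbdd : ∀ n, (Hs' n).BddBy (1 / ((n : ℝ) + 1)) := by
    intro n
    have := (Hs n).smul_bddBy (1 / ((n : ℝ) + 1)) (hHs1 n)
    have habs : |1 / ((n : ℝ) + 1)| * 1 = 1 / ((n : ℝ) + 1) := by
      rw [mul_one, abs_of_nonneg (by positivity)]
    rwa [habs] at this
  have hc : Tendsto (fun n : ℕ => 1 / ((n : ℝ) + 1)) atTop (𝓝 0) :=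
    tendsto_one_div_add_atTop_nhds_zero_nat
  have hmeas := hS_good Hs' _ hbdd hc 1 one_pos
  have hlb : ∀ n, ENNReal.ofReal ε ≤
      P {x | 1 ≤ dist (elemIntegral S (Hs' n) x) ((0 : Ω → ℝ) x)} := by
    intro n
    refine le_trans (hHs2 n).le (measure_mono ?_)
    intro ω hω
    simp only [Set.mem_setOf_eq] at hω ⊢
    rw [Pi.zero_apply, Real.dist_eq, sub_zero, hHs', elemIntegral_smul, abs_mul,
      abs_of_nonneg (by positivity : (0:ℝ) ≤ 1 / ((n : ℝ) + 1))]
    rw [div_mul_eq_mul_div, le_div_iff₀ (by positivity), one_mul]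
    calc (n : ℝ) + 1 ≤ |elemIntegral S (Hs n) ω| := hω
    _ ≤ 1 * |elemIntegral S (Hs n) ω| := by rw [one_mul]
  have : ENNReal.ofReal ε ≤ 0 := ge_of_tendsto hmeas (Eventually.of_forall fun n => (hlb n).trans
    (measure_mono fun x hx => by
      simp only [Set.mem_setOf_eq] at hx ⊢; rw [edist_dist, ENNReal.one_le_ofReal]; exact hx))
  exact absurd (le_antisymm this zero_le) (ne_of_gt (ENNReal.ofReal_pos.mpr hε))

end Aux

section Construction

/-- The dyadic time `j / 2^n`. -/
def dt (n j : ℕ) : ℝ := (j : ℝ) / 2 ^ n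

lemma dt_mono {n : ℕ} : Monotone (dt n) := fun i j h => by
  unfold dt
  have : (i : ℝ) ≤ (j : ℝ) := by exact_mod_cast h
  gcongr

lemma dt_mem {n j : ℕ} (h : j ≤ 2 ^ n) : dt n j ∈ Set.Icc (0:ℝ) 1 := by
  rw [dt]
  refine ⟨by positivity, ?_⟩
  rw [div_le_one (by positivity)]
  exact_mod_cast h

variable (ℱ : Filtration ℝ m0) (P : Measure Ω) (S : ℝ → Ω → ℝ)

/-- Dyadic increment of `S`. -/
def dS (n i : ℕ) : Ω → ℝ := fun ω => S (dt n (i + 1)) ω - S (dt n i) ω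

/-- Conditional expectation of the dyadic increment. -/
def gg (n i : ℕ) : Ω → ℝ := P[dS S n i | ℱ (dt n i)]

/-- Sign of the conditional expectation of the increment. -/
def hh (n i : ℕ) : Ω → ℝ := fun ω => if 0 ≤ gg ℱ P S n i ω then 1 else -1

/-- Partial signed sums. -/
def GG (n j : ℕ) : Ω → ℝ := fun ω => ∑ i ∈ Finset.range j, hh ℱ P S n i ω * dS S n i ω

/-- Indicator that the signed sums have stayed below `C` strictly up to index `i`. -/
def aa (C : ℝ) (n i : ℕ) : Ω → ℝ :=
  fun ω => if ∀ j, 1 ≤ j → j ≤ i → |GG ℱ P S n j ω| < C then 1 else 0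

/-- The stopping time: first dyadic time where the signed sums reach `C`. -/
def rho (C : ℝ) (n : ℕ) : Ω → WithTop ℝ := fun ω =>
  if h : ∃ j, (1 ≤ j ∧ j ≤ 2 ^ n) ∧ C ≤ |GG ℱ P S n j ω| then
    ((dt n (Nat.find h) : ℝ) : WithTop ℝ) else ⊤

variable {ℱ P S}

lemma abs_hh_le (n i : ℕ) (ω : Ω) : |hh ℱ P S n i ω| ≤ 1 := by
  rw [hh]; split_ifs <;> simp

lemma abs_aa_le (C : ℝ) (n i : ℕ) (ω : Ω) : |aa ℱ P S C n i ω| ≤ 1 := by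
  rw [aa]; split_ifs <;> simp

lemma measurable_dS (hadapt : AdaptedOn ℱ S) {n i : ℕ} (h : i + 1 ≤ 2 ^ n) :
    StronglyMeasurable[ℱ (dt n (i + 1))] (dS S n i) :=
  (hadapt _ (dt_mem h)).sub
    ((hadapt _ (dt_mem ((Nat.le_succ i).trans h))).mono (ℱ.mono (dt_mono (Nat.le_succ i))))

lemma measurable_gg (n i : ℕ) : StronglyMeasurable[ℱ (dt n i)] (gg ℱ P S n i) :=
  stronglyMeasurable_condExp

lemma measurable_hh (n i : ℕ) : StronglyMeasurable[ℱ (dt n i)] (hh ℱ P S n i) := by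
  refine Measurable.stronglyMeasurable ?_
  exact Measurable.ite (measurableSet_le measurable_const (measurable_gg n i).measurable)
    measurable_const measurable_const

lemma measurable_GG (hadapt : AdaptedOn ℱ S) {n j : ℕ} (h : j ≤ 2 ^ n) :
    StronglyMeasurable[ℱ (dt n j)] (GG ℱ P S n j) := by
  refine Measurable.stronglyMeasurable ?_
  refine Finset.measurable_sum _ fun i hi => ?_
  have hi' : i + 1 ≤ j := Finset.mem_range.mp hi
  refine Measurable.mul ?_ ?_
  · exact ((measurable_hh n i).mono (ℱ.mono (dt_mono (hi'.trans' (Nat.le_succ i))))).measurable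
  · exact ((measurable_dS hadapt (hi'.trans h)).mono (ℱ.mono (dt_mono hi'))).measurable

lemma measurable_aa (hadapt : AdaptedOn ℱ S) {C : ℝ} {n i : ℕ} (hi : i ≤ 2 ^ n) :
    StronglyMeasurable[ℱ (dt n i)] (aa ℱ P S C n i) := by
  refine Measurable.stronglyMeasurable ?_
  have hA : MeasurableSet[ℱ (dt n i)] {ω | ∀ j, 1 ≤ j → j ≤ i → |GG ℱ P S n j ω| < C} := by
    have hrw : {ω | ∀ j, 1 ≤ j → j ≤ i → |GG ℱ P S n j ω| < C}
        = ⋂ (j : ℕ) (_ : 1 ≤ j) (_ : j ≤ i), {ω | |GG ℱ P S n j ω| < C} := by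
      ext ω; simp
    rw [hrw]
    refine MeasurableSet.iInter fun j => MeasurableSet.iInter fun _ =>
      MeasurableSet.iInter fun h2 => ?_
    have hGm : Measurable[ℱ (dt n j)] (fun ω => |GG ℱ P S n j ω|) := by
      have := (measurable_GG (P := P) hadapt (h2.trans hi)).measurable
      exact continuous_abs.measurable.comp this
    have hG : MeasurableSet[ℱ (dt n j)] {ω | |GG ℱ P S n j ω| < C} :=
      hGm measurableSet_Iio
    exact ℱ.mono (dt_mono h2) _ hG
  exact Measurable.ite hA measurable_const measurable_const

lemma integrable_bdd [IsFiniteMeasure P] {f : Ω → ℝ} {c : ℝ}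
    (hm : AEStronglyMeasurable f P) (h : ∀ ω, |f ω| ≤ c) : Integrable f P :=
  ⟨hm, HasFiniteIntegral.of_bounded (C := c)
    (ae_of_all _ (by simpa [Real.norm_eq_abs] using h))⟩

end Construction

section Pointwise

variable {ℱ : Filtration ℝ m0} {P : Measure Ω} {S : ℝ → Ω → ℝ}

lemma aa_eq_one {C : ℝ} {n i : ℕ} {ω : Ω}
    (h : ∀ j, 1 ≤ j → j ≤ i → |GG ℱ P S n j ω| < C) : aa ℱ P S C n i ω = 1 := if_pos h

lemma aa_eq_zero {C : ℝ} {n i j : ℕ} {ω : Ω} (h1 : 1 ≤ j) (h2 : j ≤ i)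
    (h : C ≤ |GG ℱ P S n j ω|) : aa ℱ P S C n i ω = 0 := by
  rw [aa, if_neg]
  push_neg
  exact ⟨j, h1, h2, h⟩

lemma abs_dS_le {Cs : ℝ} (hbd : ∀ t ω, |S t ω| ≤ Cs) (n i : ℕ) (ω : Ω) :
    |dS S n i ω| ≤ 2 * Cs := by
  have h1 := abs_le.mp (hbd (dt n (i + 1)) ω)
  have h2 := abs_le.mp (hbd (dt n i) ω)
  rw [dS, abs_le]
  constructor <;> linarith

lemma stopped_diff (C : ℝ) {n i : ℕ} (hi : i < 2 ^ n) (ω : Ω) :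
    stopped S (rho ℱ P S C n) (dt n (i + 1)) ω - stopped S (rho ℱ P S C n) (dt n i) ω
      = aa ℱ P S C n i ω * dS S n i ω := by
  by_cases hex : ∃ j, (1 ≤ j ∧ j ≤ 2 ^ n) ∧ C ≤ |GG ℱ P S n j ω|
  · have hrho : rho ℱ P S C n ω = ((dt n (Nat.find hex) : ℝ) : WithTop ℝ) := dif_pos hex
    set m := Nat.find hex with hm
    have hspec := Nat.find_spec hex
    have hmin : ∀ j, j < m → ¬ ((1 ≤ j ∧ j ≤ 2 ^ n) ∧ C ≤ |GG ℱ P S n j ω|) :=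
      fun j hj => Nat.find_min hex hj
    have hkey : ∀ q : ℕ, stopped S (rho ℱ P S C n) (dt n q) ω = S (dt n (min q m)) ω := by
      intro q
      rw [stopped, hrho, ← WithTop.coe_min, WithTop.untopD_coe, ← Monotone.map_min dt_mono]
    rw [hkey, hkey]
    rcases le_or_gt m i with hmi | him
    · have hq1 : min (i + 1) m = m := min_eq_right (by omega)
      have hq2 : min i m = m := min_eq_right hmi
      rw [hq1, hq2, aa_eq_zero hspec.1.1 hmi hspec.2, zero_mul, sub_self]
    · have hq1 : min (i + 1) m = i + 1 := min_eq_left (by omega)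
      have hq2 : min i m = i := min_eq_left him.le
      have haa : aa ℱ P S C n i ω = 1 := by
        refine aa_eq_one fun j h1 h2 => ?_
        by_contra hge
        exact hmin j (lt_of_le_of_lt h2 him) ⟨⟨h1, by omega⟩, not_lt.mp hge⟩
      rw [hq1, hq2, haa, one_mul, dS]
  · have hrho : rho ℱ P S C n ω = ⊤ := dif_neg hex
    push_neg at hex
    have haa : aa ℱ P S C n i ω = 1 :=
      aa_eq_one fun j h1 h2 => hex j ⟨h1, by omega⟩
    rw [stopped, stopped, hrho, haa, one_mul, dS]
    rw [min_eq_left le_top, min_eq_left le_top, WithTop.untopD_coe, WithTop.untopD_coe]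

lemma sum_aa_hh_dS {C : ℝ} {n m : ℕ} (hm : m ≤ 2 ^ n) (ω : Ω)
    (h1 : ∀ i, i < m → aa ℱ P S C n i ω = 1)
    (h0 : ∀ i, m ≤ i → i < 2 ^ n → aa ℱ P S C n i ω = 0) :
    ∑ i ∈ Finset.range (2 ^ n), aa ℱ P S C n i ω * hh ℱ P S n i ω * dS S n i ω
      = GG ℱ P S n m ω := by
  have e1 : ∑ i ∈ Finset.range m, aa ℱ P S C n i ω * hh ℱ P S n i ω * dS S n i ω
      = ∑ i ∈ Finset.range (2 ^ n), aa ℱ P S C n i ω * hh ℱ P S n i ω * dS S n i ω := by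
    refine Finset.sum_subset (Finset.range_subset_range.mpr hm) fun i hi hni => ?_
    rw [h0 i (by simpa using hni) (Finset.mem_range.mp hi), zero_mul, zero_mul]
  rw [← e1, GG]
  exact Finset.sum_congr rfl fun i hi => by rw [h1 i (Finset.mem_range.mp hi), one_mul]

lemma sum_eq_GG_find {C : ℝ} {n : ℕ} {ω : Ω}
    (hex : ∃ j, (1 ≤ j ∧ j ≤ 2 ^ n) ∧ C ≤ |GG ℱ P S n j ω|) :
    ∑ i ∈ Finset.range (2 ^ n), aa ℱ P S C n i ω * hh ℱ P S n i ω * dS S n i ω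
      = GG ℱ P S n (Nat.find hex) ω := by
  set m := Nat.find hex with hm
  have hspec := Nat.find_spec hex
  have hmin : ∀ j, j < m → ¬ ((1 ≤ j ∧ j ≤ 2 ^ n) ∧ C ≤ |GG ℱ P S n j ω|) :=
    fun j hj => Nat.find_min hex hj
  refine sum_aa_hh_dS hspec.1.2 ω (fun i hi => ?_) (fun i hmi hi => ?_)
  · refine aa_eq_one fun j h1 h2 => ?_
    by_contra hge
    exact hmin j (by omega) ⟨⟨h1, by omega⟩, not_lt.mp hge⟩
  · exact aa_eq_zero hspec.1.1 hmi hspec.2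

lemma sum_eq_GG_top {C : ℝ} {n : ℕ} {ω : Ω}
    (hex : ¬ ∃ j, (1 ≤ j ∧ j ≤ 2 ^ n) ∧ C ≤ |GG ℱ P S n j ω|) :
    ∑ i ∈ Finset.range (2 ^ n), aa ℱ P S C n i ω * hh ℱ P S n i ω * dS S n i ω
      = GG ℱ P S n (2 ^ n) ω := by
  push_neg at hex
  refine sum_aa_hh_dS le_rfl ω (fun i hi => ?_) (fun i hmi hi => by omega)
  exact aa_eq_one fun j h1 h2 => hex j ⟨h1, by omega⟩

lemma II_bound {C Cs : ℝ} (hCpos : 0 < C) (hbd : ∀ t ω, |S t ω| ≤ Cs) (hCs : 0 ≤ Cs)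
    (n : ℕ) (ω : Ω) :
    |∑ i ∈ Finset.range (2 ^ n), aa ℱ P S C n i ω * hh ℱ P S n i ω * dS S n i ω|
      ≤ C + 2 * Cs := by
  by_cases hex : ∃ j, (1 ≤ j ∧ j ≤ 2 ^ n) ∧ C ≤ |GG ℱ P S n j ω|
  · rw [sum_eq_GG_find hex]
    set m := Nat.find hex with hm
    have hspec := Nat.find_spec hex
    have hmin : ∀ j, j < m → ¬ ((1 ≤ j ∧ j ≤ 2 ^ n) ∧ C ≤ |GG ℱ P S n j ω|) :=
      fun j hj => Nat.find_min hex hj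
    obtain ⟨p, hp⟩ : ∃ p, m = p + 1 := ⟨m - 1, by omega⟩
    have hsplit : GG ℱ P S n m ω = GG ℱ P S n p ω + hh ℱ P S n p ω * dS S n p ω := by
      rw [hp, GG, GG, Finset.sum_range_succ]
    have hGp : |GG ℱ P S n p ω| ≤ C := by
      rcases Nat.eq_zero_or_pos p with hp0 | hp1
      · simp [hp0, GG, hCpos.le]
      · have := hmin p (by omega)
        by_contra hge
        exact this ⟨⟨hp1, by omega⟩, (not_le.mp hge).le⟩
    have hterm : |hh ℱ P S n p ω * dS S n p ω| ≤ 2 * Cs := by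
      rw [abs_mul]
      calc |hh ℱ P S n p ω| * |dS S n p ω| ≤ 1 * (2 * Cs) :=
        mul_le_mul (abs_hh_le n p ω) (abs_dS_le hbd n p ω) (abs_nonneg _) one_pos.le
      _ = 2 * Cs := one_mul _
    calc |GG ℱ P S n m ω| ≤ |GG ℱ P S n p ω| + |hh ℱ P S n p ω * dS S n p ω| := by
          rw [hsplit]; exact abs_add_le _ _
    _ ≤ C + 2 * Cs := add_le_add hGp hterm
  · rw [sum_eq_GG_top hex]
    push_neg at hex
    have := hex (2 ^ n) ⟨Nat.one_le_two_pow, le_rfl⟩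
    linarith

lemma II_trig {C : ℝ} {n : ℕ} {ω : Ω}
    (hex : ∃ j, (1 ≤ j ∧ j ≤ 2 ^ n) ∧ C ≤ |GG ℱ P S n j ω|) :
    C ≤ |∑ i ∈ Finset.range (2 ^ n), aa ℱ P S C n i ω * hh ℱ P S n i ω * dS S n i ω| := by
  rw [sum_eq_GG_find hex]
  exact (Nat.find_spec hex).2

end Pointwise

section RhoFacts

variable {ℱ : Filtration ℝ m0} {P : Measure Ω} {S : ℝ → Ω → ℝ}

lemma rho_isStoppingTime (hadapt : AdaptedOn ℱ S) (C : ℝ) (n : ℕ) :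
    IsStoppingTimeTop ℱ (rho ℱ P S C n) := by
  intro t
  have hset : {ω | rho ℱ P S C n ω ≤ (t : WithTop ℝ)}
      = ⋃ (j : ℕ) (_ : (1 ≤ j ∧ j ≤ 2 ^ n) ∧ dt n j ≤ t), {ω | C ≤ |GG ℱ P S n j ω|} := by
    ext ω
    simp only [Set.mem_setOf_eq, Set.mem_iUnion]
    constructor
    · intro hle
      rw [rho] at hle
      split_ifs at hle with hex
      · have hspec := Nat.find_spec hex
        exact ⟨Nat.find hex, ⟨hspec.1, WithTop.coe_le_coe.mp hle⟩, hspec.2⟩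
      · exact absurd hle (WithTop.not_top_le_coe t)
    · rintro ⟨j, ⟨hj1, hjt⟩, hjG⟩
      have hex : ∃ j', (1 ≤ j' ∧ j' ≤ 2 ^ n) ∧ C ≤ |GG ℱ P S n j' ω| := ⟨j, hj1, hjG⟩
      rw [rho, dif_pos hex]
      have hle : Nat.find hex ≤ j := Nat.find_min' hex ⟨hj1, hjG⟩
      exact WithTop.coe_le_coe.mpr (le_trans (dt_mono hle) hjt)
  rw [hset]
  refine MeasurableSet.iUnion fun j => MeasurableSet.iUnion fun hj => ?_
  have hGm : Measurable[ℱ (dt n j)] fun ω => |GG ℱ P S n j ω| := by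
    have := (measurable_GG (P := P) hadapt hj.1.2).measurable
    exact continuous_abs.measurable.comp this
  exact ℱ.mono hj.2 _ (hGm measurableSet_Ici)

lemma rho_valued (C : ℝ) (n : ℕ) : ValuedInUnitOrTop (rho ℱ P S C n) := by
  intro ω
  rw [rho]
  split_ifs with hex
  · exact Or.inr ⟨dt n (Nat.find hex), dt_mem (Nat.find_spec hex).1.2, rfl⟩
  · exact Or.inl rfl

lemma measurable_rho_ne_top (hadapt : AdaptedOn ℱ S) (C : ℝ) (n : ℕ) :
    MeasurableSet {ω | rho ℱ P S C n ω ≠ ⊤} := by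
  have hset : {ω | rho ℱ P S C n ω ≠ ⊤}
      = ⋃ (j : ℕ) (_ : 1 ≤ j ∧ j ≤ 2 ^ n), {ω | C ≤ |GG ℱ P S n j ω|} := by
    ext ω
    simp only [Set.mem_setOf_eq, Set.mem_iUnion]
    constructor
    · intro hne
      rw [rho] at hne
      split_ifs at hne with hex
      · exact ⟨Nat.find hex, (Nat.find_spec hex).1, (Nat.find_spec hex).2⟩
      · exact absurd rfl hne
    · rintro ⟨j, hj1, hjG⟩
      rw [rho, dif_pos ⟨j, hj1, hjG⟩]
      exact WithTop.coe_ne_top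
  rw [hset]
  refine MeasurableSet.iUnion fun j => MeasurableSet.iUnion fun hj => ?_
  have hGm : Measurable fun ω => |GG ℱ P S n j ω| :=
    continuous_abs.measurable.comp
      (((measurable_GG (P := P) hadapt hj.2).mono (ℱ.le _)).measurable)
  exact hGm measurableSet_Ici

end RhoFacts

section DyadicSimpleDef

variable (ℱ : Filtration ℝ m0) (P : Measure Ω) (S : ℝ → Ω → ℝ)

/-- The stopped sign integrand as a simple integrand. -/
def dyadicSimple (hadapt : AdaptedOn ℱ S) (C : ℝ) (n : ℕ) : SimpleIntegrand ℱ where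
  k := 2 ^ n
  τ := fun i _ => dt n i.val
  τ_mono := fun ω i j hij => dt_mono (Fin.le_def.mp hij)
  τ_mem := fun i ω => dt_mem (Nat.lt_succ_iff.mp i.isLt)
  τ_stopping := fun i => isStoppingTime_const ℱ _
  H := fun i ω => aa ℱ P S C n i.val ω * hh ℱ P S n i.val ω
  H_bdd := fun i => ⟨1, fun ω => by
    rw [abs_mul]
    calc |aa ℱ P S C n i.val ω| * |hh ℱ P S n i.val ω| ≤ 1 * 1 :=
      mul_le_mul (abs_aa_le C n i.val ω) (abs_hh_le n i.val ω) (abs_nonneg _) zero_le_one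
    _ = 1 := one_mul 1⟩
  H_meas := fun i => by
    rw [IsStoppingTime.measurableSpace_const]
    exact (measurable_aa hadapt i.isLt.le).mul (measurable_hh n i.val)

variable {ℱ P S}

lemma elemIntegral_dyadicSimple (hadapt : AdaptedOn ℱ S) (C : ℝ) (n : ℕ) (ω : Ω) :
    elemIntegral S (dyadicSimple ℱ P S hadapt C n) ω
      = ∑ i ∈ Finset.range (2 ^ n), aa ℱ P S C n i ω * hh ℱ P S n i ω * dS S n i ω := by
  rw [elemIntegral]
  rw [← Fin.sum_univ_eq_sum_range
    (fun i => aa ℱ P S C n i ω * hh ℱ P S n i ω * dS S n i ω) (2 ^ n)]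
  refine Finset.sum_congr rfl fun i _ => ?_
  simp only [dyadicSimple, dS, Fin.val_succ, Fin.coe_castSucc]
  rfl
  try ring

lemma dyadicSimple_bddBy (hadapt : AdaptedOn ℱ S) (C : ℝ) (n : ℕ) :
    (dyadicSimple ℱ P S hadapt C n).BddBy 1 := by
  refine SimpleIntegrand.bddBy_of_forall _ zero_le_one fun i ω => ?_
  show |aa ℱ P S C n i.val ω * hh ℱ P S n i.val ω| ≤ 1
  rw [abs_mul]
  calc |aa ℱ P S C n i.val ω| * |hh ℱ P S n i.val ω| ≤ 1 * 1 :=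
    mul_le_mul (abs_aa_le C n i.val ω) (abs_hh_le n i.val ω) (abs_nonneg _) zero_le_one
  _ = 1 := one_mul 1

end DyadicSimpleDef

section CondExpComputation

variable {ℱ : Filtration ℝ m0} {P : Measure Ω} {S : ℝ → Ω → ℝ}

lemma abs_aa_mul_gg (C : ℝ) (n i : ℕ) (ω : Ω) :
    |aa ℱ P S C n i ω * gg ℱ P S n i ω|
      = aa ℱ P S C n i ω * hh ℱ P S n i ω * gg ℱ P S n i ω := by
  rw [aa, hh]
  split_ifs with h1 h2 h2
  · rw [one_mul, one_mul, one_mul, abs_of_nonneg h2]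
  · rw [one_mul, one_mul, abs_of_neg (not_le.mp h2)]; ring
  · rw [zero_mul, zero_mul, zero_mul, abs_zero]
  · rw [zero_mul, zero_mul, zero_mul, abs_zero]

lemma meanVar_term [IsProbabilityMeasure P] (hadapt : AdaptedOn ℱ S) {Cs : ℝ}
    (hbd : ∀ t ω, |S t ω| ≤ Cs) (C : ℝ) {n i : ℕ} (hi : i < 2 ^ n) :
    ∫ ω, |(P[fun ω => stopped S (rho ℱ P S C n) (dt n (i + 1)) ω
        - stopped S (rho ℱ P S C n) (dt n i) ω | ℱ (dt n i)]) ω| ∂P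
      = ∫ ω, aa ℱ P S C n i ω * hh ℱ P S n i ω * dS S n i ω ∂P := by
  have hCs : 0 ≤ Cs := (abs_nonneg _).trans (hbd 0 (Classical.choice (by
    by_contra hemp
    have : P Set.univ = 1 := measure_univ
    rw [Set.univ_eq_empty_iff.mpr (not_nonempty_iff.mp fun ⟨ω⟩ => hemp ⟨ω⟩)] at this
    simp at this)))
  have hdSm : AEStronglyMeasurable (dS S n i) P :=
    ((measurable_dS hadapt hi).mono (ℱ.le _)).aestronglyMeasurable
  have hdSint : Integrable (dS S n i) P := integrable_bdd hdSm (abs_dS_le hbd n i)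
  have haam : StronglyMeasurable[ℱ (dt n i)] (aa ℱ P S C n i) := measurable_aa hadapt hi.le
  have hahm : StronglyMeasurable[ℱ (dt n i)]
      (fun ω => aa ℱ P S C n i ω * hh ℱ P S n i ω) := haam.mul (measurable_hh n i)
  have haadSint : Integrable (aa ℱ P S C n i * dS S n i) P := by
    refine integrable_bdd (((haam.mono (ℱ.le _)).aestronglyMeasurable).mul hdSm) (c := 2 * Cs)
      fun ω => ?_
    rw [Pi.mul_apply, abs_mul]
    calc |aa ℱ P S C n i ω| * |dS S n i ω| ≤ 1 * (2 * Cs) :=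
      mul_le_mul (abs_aa_le C n i ω) (abs_dS_le hbd n i ω) (abs_nonneg _) zero_le_one
    _ = 2 * Cs := one_mul _
  have hahdSint : Integrable ((fun ω => aa ℱ P S C n i ω * hh ℱ P S n i ω) * dS S n i) P := by
    refine integrable_bdd (((hahm.mono (ℱ.le _)).aestronglyMeasurable).mul hdSm) (c := 2 * Cs)
      fun ω => ?_
    rw [Pi.mul_apply, abs_mul]
    have hab : |aa ℱ P S C n i ω * hh ℱ P S n i ω| ≤ 1 := by
      rw [abs_mul]
      calc |aa ℱ P S C n i ω| * |hh ℱ P S n i ω| ≤ 1 * 1 :=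
        mul_le_mul (abs_aa_le C n i ω) (abs_hh_le n i ω) (abs_nonneg _) zero_le_one
      _ = 1 := one_mul 1
    calc |aa ℱ P S C n i ω * hh ℱ P S n i ω| * |dS S n i ω| ≤ 1 * (2 * Cs) :=
      mul_le_mul hab (abs_dS_le hbd n i ω) (abs_nonneg _) zero_le_one
    _ = 2 * Cs := one_mul _
  have hfun : (fun ω => stopped S (rho ℱ P S C n) (dt n (i + 1)) ω
      - stopped S (rho ℱ P S C n) (dt n i) ω) = aa ℱ P S C n i * dS S n i :=
    funext fun ω => stopped_diff C hi ω
  rw [hfun]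
  have h1 : P[aa ℱ P S C n i * dS S n i | ℱ (dt n i)]
      =ᵐ[P] aa ℱ P S C n i * gg ℱ P S n i :=
    condExp_mul_of_stronglyMeasurable_left haam haadSint hdSint
  have e1 : ∫ ω, |(P[aa ℱ P S C n i * dS S n i | ℱ (dt n i)]) ω| ∂P
      = ∫ ω, |aa ℱ P S C n i ω * gg ℱ P S n i ω| ∂P :=
    integral_congr_ae (h1.mono fun ω h => by dsimp only; rw [h, Pi.mul_apply])
  rw [e1]
  have e2 : ∫ ω, |aa ℱ P S C n i ω * gg ℱ P S n i ω| ∂P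
      = ∫ ω, aa ℱ P S C n i ω * hh ℱ P S n i ω * gg ℱ P S n i ω ∂P :=
    integral_congr_ae (ae_of_all _ fun ω => abs_aa_mul_gg C n i ω)
  rw [e2]
  have h2 : P[(fun ω => aa ℱ P S C n i ω * hh ℱ P S n i ω) * dS S n i | ℱ (dt n i)]
      =ᵐ[P] (fun ω => aa ℱ P S C n i ω * hh ℱ P S n i ω) * gg ℱ P S n i :=
    condExp_mul_of_stronglyMeasurable_left hahm hahdSint hdSint
  have e3 : ∫ ω, aa ℱ P S C n i ω * hh ℱ P S n i ω * gg ℱ P S n i ω ∂P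
      = ∫ ω, (P[(fun ω => aa ℱ P S C n i ω * hh ℱ P S n i ω) * dS S n i | ℱ (dt n i)]) ω ∂P :=
    (integral_congr_ae (h2.mono fun ω h => by rw [h, Pi.mul_apply])).symm
  rw [e3, integral_condExp (ℱ.le _)]
  exact integral_congr_ae (ae_of_all _ fun ω => by rw [Pi.mul_apply])

end CondExpComputation

/-- If `S` is a càdlàg bounded adapted good integrator then for every `ε > 0`
there are `C > 0` and stopping times `(ρ_n)` with `P(ρ_n = ∞) ≥ 1 - ε` and
`Var(S^{ρ_n}, D_n) ≤ C` for all `n`. -/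
theorem goodIntegrator_meanVar_bound
    (ℱ : Filtration ℝ m0) (P : Measure Ω) [IsProbabilityMeasure P]
    (hUC : UsualConditions ℱ P) (S : ℝ → Ω → ℝ)
    (hS_bdd : ∃ C : ℝ, ∀ t ω, |S t ω| ≤ C)
    (hS_cadlag : Cadlag S) (hS_adapted : AdaptedOn ℱ S)
    (hS_good : GoodIntegrator ℱ P S) :
    ∀ ε : ℝ, 0 < ε → ∃ C : ℝ, 0 < C ∧ ∃ ρ : ℕ → Ω → WithTop ℝ,
      ∀ n : ℕ, IsStoppingTimeTop ℱ (ρ n) ∧ ValuedInUnitOrTop (ρ n) ∧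
        1 - ENNReal.ofReal ε ≤ P {ω | ρ n ω = ⊤} ∧
        meanVar ℱ P (stopped S (ρ n)) (dyadicPartition n) ≤ C := by
  intro ε hε
  obtain ⟨Cs0, hCs0⟩ := hS_bdd
  set Cs : ℝ := |Cs0| with hCsdef
  have hbd : ∀ t ω, |S t ω| ≤ Cs := fun t ω => (hCs0 t ω).trans (le_abs_self Cs0)
  have hCs : 0 ≤ Cs := abs_nonneg _
  obtain ⟨C, hCpos, hC⟩ := goodIntegrator_bddInProb hS_good hε
  refine ⟨C + 2 * Cs + 1, by positivity, fun n => rho ℱ P S C n, fun n => ?_⟩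
  refine ⟨rho_isStoppingTime hS_adapted C n, rho_valued C n, ?_, ?_⟩
  · -- probability bound
    have hsub : {ω | rho ℱ P S C n ω ≠ ⊤}
        ⊆ {ω | C ≤ |elemIntegral S (dyadicSimple ℱ P S hS_adapted C n) ω|} := by
      intro ω hω
      simp only [Set.mem_setOf_eq] at hω ⊢
      have hex : ∃ j, (1 ≤ j ∧ j ≤ 2 ^ n) ∧ C ≤ |GG ℱ P S n j ω| := by
        by_contra h
        exact hω (dif_neg h)
      rw [elemIntegral_dyadicSimple]
      exact II_trig hex
    have hP1 : P {ω | rho ℱ P S C n ω ≠ ⊤} ≤ ENNReal.ofReal ε :=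
      (measure_mono hsub).trans (hC _ (dyadicSimple_bddBy hS_adapted C n))
    have hcompl : {ω | rho ℱ P S C n ω = ⊤} = {ω | rho ℱ P S C n ω ≠ ⊤}ᶜ := by
      ext ω; simp
    have heq : P {ω | rho ℱ P S C n ω = ⊤} = 1 - P {ω | rho ℱ P S C n ω ≠ ⊤} := by
      rw [hcompl, measure_compl (measurable_rho_ne_top hS_adapted C n) (measure_ne_top P _),
        measure_univ]
    rw [heq]
    exact tsub_le_tsub_left hP1 1
  · -- mean variation bound
    have hterm_int : ∀ i ∈ Finset.range (2 ^ n),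
        Integrable (fun ω => aa ℱ P S C n i ω * hh ℱ P S n i ω * dS S n i ω) P := by
      intro i hi
      have hi' := Finset.mem_range.mp hi
      refine integrable_bdd (c := 2 * Cs) ?_ fun ω => ?_
      · exact ((((measurable_aa hS_adapted hi'.le).mul (measurable_hh n i)).mono
          (ℱ.le _)).aestronglyMeasurable).mul
          (((measurable_dS hS_adapted hi').mono (ℱ.le _)).aestronglyMeasurable)
      · rw [abs_mul]
        have hab : |aa ℱ P S C n i ω * hh ℱ P S n i ω| ≤ 1 := by
          rw [abs_mul]
          calc |aa ℱ P S C n i ω| * |hh ℱ P S n i ω| ≤ 1 * 1 :=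
            mul_le_mul (abs_aa_le C n i ω) (abs_hh_le n i ω) (abs_nonneg _) zero_le_one
          _ = 1 := one_mul 1
        calc |aa ℱ P S C n i ω * hh ℱ P S n i ω| * |dS S n i ω| ≤ 1 * (2 * Cs) :=
          mul_le_mul hab (abs_dS_le hbd n i ω) (abs_nonneg _) zero_le_one
        _ = 2 * Cs := one_mul _
    have hmv : meanVar ℱ P (stopped S (rho ℱ P S C n)) (dyadicPartition n)
        = ∑ i ∈ Finset.range (2 ^ n),
            ∫ ω, aa ℱ P S C n i ω * hh ℱ P S n i ω * dS S n i ω ∂P := by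
      rw [meanVar]
      show (∑ i : Fin (2 ^ n), ∫ ω,
          |(P[fun ω => stopped S (rho ℱ P S C n) ((dyadicPartition n).t i.succ) ω
            - stopped S (rho ℱ P S C n) ((dyadicPartition n).t i.castSucc) ω
            | ℱ ((dyadicPartition n).t i.castSucc)]) ω| ∂P) = _
      rw [← Fin.sum_univ_eq_sum_range
        (fun i => ∫ ω, aa ℱ P S C n i ω * hh ℱ P S n i ω * dS S n i ω ∂P) (2 ^ n)]
      refine Finset.sum_congr rfl fun i _ => ?_
      have h1 : (dyadicPartition n).t i.succ = dt n (i.val + 1) := by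
        simp [dyadicPartition, dt]
      have h2 : (dyadicPartition n).t i.castSucc = dt n i.val := by
        simp [dyadicPartition, dt]
      rw [h1, h2]
      exact meanVar_term hS_adapted hbd C i.isLt
    rw [hmv, ← integral_finset_sum _ hterm_int]
    have hint : Integrable
        (fun ω => ∑ i ∈ Finset.range (2 ^ n),
          aa ℱ P S C n i ω * hh ℱ P S n i ω * dS S n i ω) P :=
      integrable_finset_sum _ hterm_int
    calc ∫ ω, ∑ i ∈ Finset.range (2 ^ n),
          aa ℱ P S C n i ω * hh ℱ P S n i ω * dS S n i ω ∂P
        ≤ ∫ _ω, (C + 2 * Cs) ∂P := by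
          refine integral_mono hint (integrable_const _) fun ω => ?_
          exact (le_abs_self _).trans (II_bound hCpos hbd hCs n ω)
    _ = C + 2 * Cs := by simp
    _ ≤ C + 2 * Cs + 1 := by linarith


end BD
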